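/- Let Sys be an SPA process tree and a an action. For every leaf P of Sys there exists exactly one a-scope of Sys whose set of leaves contains P; that is, the a-scopes of Sys partition its leaves. -/

import Mathlib

/-!
An SPA system is modelled as a finite binary process tree: leaves are
sequential processes, each internal node is a parallel composition operator
labelled with a synchronisation set of actions.  Nodes (subtrees) of the tree
are identified with their positions, encoded as lists of Booleans (directions
from the root); a node `p` contains a node `q` iff `p` is a prefix of `q`.
-/

namespace SPA

/-- Binary process trees over a set of actions `Act`. -/
inductive PTree (Act : Type) : Type
  | leaf : PTree Act
  | node : Set Act → PTree Act → PTree Act → PTree Act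

variable {Act : Type}

/-- The subtree of a tree at a given position (if the position is valid). -/
def subtreeAt : PTree Act → List Bool → Option (PTree Act)
  | t, [] => some t
  | .leaf, _ :: _ => none
  | .node _ l r, b :: p => subtreeAt (if b then r else l) p

/-- `p` is a (valid position of a) node of `Sys`. -/
def IsNode (Sys : PTree Act) (p : List Bool) : Prop :=
  (subtreeAt Sys p).isSome

/-- `p` is a leaf of `Sys`, i.e. a sequential process. -/
def IsLeaf (Sys : PTree Act) (p : List Bool) : Prop :=
  subtreeAt Sys p = some .leaf

/-- The node at position `p` is an internal node of type `||_a`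
(its synchronisation set contains `a`). -/
def SyncAt (Sys : PTree Act) (p : List Bool) (a : Act) : Prop :=
  ∃ A l r, subtreeAt Sys p = some (.node A l r) ∧ a ∈ A

/-- The node at position `p` is an internal node of type `||_{¬a}`
(its synchronisation set does not contain `a`). -/
def NSyncAt (Sys : PTree Act) (p : List Bool) (a : Act) : Prop :=
  ∃ A l r, subtreeAt Sys p = some (.node A l r) ∧ a ∉ A

/-- Two nodes are disjoint iff neither subtree contains the other. -/
def DisjointNodes (p q : List Bool) : Prop :=
  ¬ p <+: q ∧ ¬ q <+: p

/-- The longest common prefix of two positions: the join (lowest common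
ancestor) of the two nodes, i.e. the root of the smallest subtree
containing both. -/
def lcp : List Bool → List Bool → List Bool
  | a :: as, b :: bs => if a = b then a :: lcp as bs else []
  | _, _ => []

/-- `q` lies strictly between `r` and `x` on the path from `r` down to `x`
(exclusive of both endpoints). -/
def StrictlyBetween (r x q : List Bool) : Prop :=
  r <+: q ∧ q <+: x ∧ q ≠ r ∧ q ≠ x

/-- The set of leaves of the subtree rooted at `p`. -/
def LeavesUnder (Sys : PTree Act) (p : List Bool) : Set (List Bool) :=
  {q | p <+: q ∧ IsLeaf Sys q}


/-- An `a`-scope of `Sys`: either a subtree rooted at an internal node of type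
`||_a`, or a single leaf, such that in either case every node strictly above it
(on the path to the root of `Sys`) is of type `||_{¬a}`. -/
def AScope (Sys : PTree Act) (a : Act) (p : List Bool) : Prop :=
  (SyncAt Sys p a ∨ IsLeaf Sys p) ∧
    ∀ q, q <+: p → q ≠ p → NSyncAt Sys q a

lemma exists_scope (a : Act) : ∀ (Sys : PTree Act) (P : List Bool), IsLeaf Sys P →
    ∃ p, AScope Sys a p ∧ p <+: P := by
  intro Sys
  induction Sys with
  | leaf =>
    intro P hP
    exact ⟨[], ⟨Or.inr rfl, fun q hq hne => absurd (List.prefix_nil.mp hq) hne⟩,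
      List.nil_prefix⟩
  | node A l r ihl ihr =>
    intro P hP
    by_cases ha : a ∈ A
    · exact ⟨[], ⟨Or.inl ⟨A, l, r, rfl, ha⟩,
        fun q hq hne => absurd (List.prefix_nil.mp hq) hne⟩, List.nil_prefix⟩
    · match P, hP with
      | [], hP => exact absurd hP (by simp [IsLeaf, subtreeAt])
      | b :: P', hP =>
        cases b with
        | false =>
          obtain ⟨p', ⟨hsl, hns⟩, hpre⟩ := ihl P' hP
          refine ⟨false :: p', ⟨?_, ?_⟩, List.cons_prefix_cons.mpr ⟨rfl, hpre⟩⟩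
          · cases hsl with
            | inl h => exact Or.inl h
            | inr h => exact Or.inr h
          · intro q hq hne
            match q, hq with
            | [], _ => exact ⟨A, l, r, rfl, ha⟩
            | c :: q', hq =>
              obtain ⟨rfl, hq'⟩ := List.cons_prefix_cons.mp hq
              exact hns q' hq' (fun h => hne (by rw [h]))
        | true =>
          obtain ⟨p', ⟨hsl, hns⟩, hpre⟩ := ihr P' hP
          refine ⟨true :: p', ⟨?_, ?_⟩, List.cons_prefix_cons.mpr ⟨rfl, hpre⟩⟩
          · cases hsl with
            | inl h => exact Or.inl h
            | inr h => exact Or.inr h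
          · intro q hq hne
            match q, hq with
            | [], _ => exact ⟨A, l, r, rfl, ha⟩
            | c :: q', hq =>
              obtain ⟨rfl, hq'⟩ := List.cons_prefix_cons.mp hq
              exact hns q' hq' (fun h => hne (by rw [h]))

lemma scope_not_strict_prefix {Sys : PTree Act} {a : Act} {p p' : List Bool}
    (h : AScope Sys a p) (h' : AScope Sys a p') (hpre : p <+: p') : p = p' := by
  by_contra hne
  obtain ⟨A, l, r, heq, hna⟩ := h'.2 p hpre hne
  cases h.1 with
  | inl hs =>
    obtain ⟨A', l', r', heq', ha'⟩ := hs
    rw [heq] at heq'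
    injection heq' with heq'
    injection heq' with h1 h2 h3
    exact hna (h1 ▸ ha')
  | inr hl =>
    rw [IsLeaf, heq] at hl
    cases hl

/-- For every leaf `P` of `Sys` there exists exactly one `a`-scope
of `Sys` whose set of leaves contains `P`: the `a`-scopes partition the leaves. -/
theorem ascope_partition (Sys : PTree Act) (a : Act) (P : List Bool)
    (hP : IsLeaf Sys P) :
    ∃! p, AScope Sys a p ∧ P ∈ LeavesUnder Sys p := by
  obtain ⟨p, hscope, hpre⟩ := exists_scope a Sys P hP
  refine ⟨p, ⟨hscope, hpre, hP⟩, ?_⟩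
  rintro p' ⟨hscope', hpre', -⟩
  rcases List.prefix_or_prefix_of_prefix hpre' hpre with h | h
  · exact scope_not_strict_prefix hscope' hscope h
  · exact (scope_not_strict_prefix hscope hscope' h).symm

end SPA
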